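/- For every real β with 0 < β < 1, β^β · (1−β)^{1−β} · e^β ≥ e/(e+1), with equality attained at the minimizer of g(β) = β^β(1−β)^{1−β}e^β over (0,1). -/

import Mathlib

/-- For every `β ∈ (0,1)`, `β^β (1-β)^(1-β) e^β ≥ e/(e+1)`, with equality attained at the
minimizer of `g(β) = β^β (1-β)^(1-β) e^β` over `(0,1)`. -/
theorem stmt_12 :
    (∀ β : ℝ, 0 < β → β < 1 →
      Real.exp 1 / (Real.exp 1 + 1) ≤ β ^ β * (1 - β) ^ (1 - β) * Real.exp β) ∧
    (∃ β₀ : ℝ, 0 < β₀ ∧ β₀ < 1 ∧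
      β₀ ^ β₀ * (1 - β₀) ^ (1 - β₀) * Real.exp β₀ = Real.exp 1 / (Real.exp 1 + 1) ∧
      ∀ β : ℝ, 0 < β → β < 1 →
        β₀ ^ β₀ * (1 - β₀) ^ (1 - β₀) * Real.exp β₀
          ≤ β ^ β * (1 - β) ^ (1 - β) * Real.exp β) := by
  set E := Real.exp 1 with hE
  have hE1 : 1 < E := by
    rw [hE]; have := Real.exp_one_gt_d9; linarith
  have hEp : (0:ℝ) < E + 1 := by linarith
  set L := Real.log (E + 1) with hL
  set p : ℝ := 1 / (E + 1) with hp
  have hp0 : 0 < p := by positivity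
  have hp1 : p < 1 := by rw [hp, div_lt_one hEp]; linarith
  have hlogp : Real.log p = -L := by
    rw [hp, Real.log_div one_ne_zero (ne_of_gt hEp), Real.log_one, hL]; ring
  have h1p : 1 - p = E / (E + 1) := by rw [hp]; field_simp; ring
  have hlog1p : Real.log (1 - p) = 1 - L := by
    rw [h1p, Real.log_div (by positivity) (ne_of_gt hEp), hE, Real.log_exp, hL, hE]
  have hEL : E / (E + 1) = Real.exp (1 - L) := by
    rw [Real.exp_sub, hL, Real.exp_log hEp, hE]
  have key : ∀ β : ℝ, 0 < β → β < 1 →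
      E / (E + 1) ≤ β ^ β * (1 - β) ^ (1 - β) * Real.exp β := by
    intro β hβ0 hβ1
    have h1β : 0 < 1 - β := by linarith
    rw [Real.rpow_def_of_pos hβ0, Real.rpow_def_of_pos h1β, ← Real.exp_add, ← Real.exp_add,
      hEL, Real.exp_le_exp]
    -- key entropy inequalities from log x ≤ x - 1
    have t1 := Real.log_le_sub_one_of_pos (show (0:ℝ) < p / β by positivity)
    rw [Real.log_div (ne_of_gt hp0) (ne_of_gt hβ0)] at t1
    have i1 : β * Real.log p - β * Real.log β ≤ p - β := by
      have h := mul_le_mul_of_nonneg_left t1 hβ0.le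
      have hb : β * (p / β - 1) = p - β := by field_simp
      nlinarith [h]
    have t2 := Real.log_le_sub_one_of_pos (div_pos (by linarith : (0:ℝ) < 1 - p) h1β)
    rw [Real.log_div (by linarith : (1:ℝ) - p ≠ 0) (ne_of_gt h1β)] at t2
    have i2 : (1 - β) * Real.log (1 - p) - (1 - β) * Real.log (1 - β) ≤ (1 - p) - (1 - β) := by
      have h := mul_le_mul_of_nonneg_left t2 h1β.le
      have hb : (1 - β) * ((1 - p) / (1 - β) - 1) = (1 - p) - (1 - β) := by field_simp
      nlinarith [h]
    rw [hlogp] at i1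
    rw [hlog1p] at i2
    nlinarith [i1, i2]
  refine ⟨key, p, hp0, hp1, ?_, fun β hβ0 hβ1 => ?_⟩
  · have h1p0 : 0 < 1 - p := by linarith
    rw [Real.rpow_def_of_pos hp0, Real.rpow_def_of_pos h1p0, ← Real.exp_add, ← Real.exp_add,
      hlogp, hlog1p, hEL]
    exact congrArg Real.exp (by ring)
  · have h1p0 : 0 < 1 - p := by linarith
    calc p ^ p * (1 - p) ^ (1 - p) * Real.exp p
        = E / (E + 1) := by
          rw [Real.rpow_def_of_pos hp0, Real.rpow_def_of_pos h1p0, ← Real.exp_add,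
            ← Real.exp_add, hlogp, hlog1p, hEL]
          exact congrArg Real.exp (by ring)
      _ ≤ _ := key β hβ0 hβ1
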